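/- The point aH lies on the median from A (i.e., A, G, aH are collinear, where G is the centroid of ABC) and on the orthocentroidal circle with diameter GH, i.e., the inner product ⟪G − aH, H − aH⟫ = 0, where H is the orthocenter. -/

import Mathlib

open EuclideanGeometry RealInnerProductSpace

theorem aH_on_median_and_orthocentroidal_circle
    (A B C G H aH : EuclideanSpace ℝ (Fin 2))
    (hABC : AffineIndependent ℝ ![A, B, C])
    (a b c : ℝ) (ha : a = dist B C) (hb : b = dist C A) (hc : c = dist A B)
    (hG : G = (3 : ℝ)⁻¹ • (A + B + C))
    (hH : H = Affine.Triangle.orthocenter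
      (⟨![A, B, C], hABC⟩ : Affine.Triangle ℝ (EuclideanSpace ℝ (Fin 2))))
    (haH : aH = (2*b^2 + 2*c^2 - a^2)⁻¹ •
      ((a^2) • A + (b^2 + c^2 - a^2) • B + (b^2 + c^2 - a^2) • C)) :
    Collinear ℝ ({A, G, aH} : Set (EuclideanSpace ℝ (Fin 2))) ∧
      ⟪G - aH, H - aH⟫ = 0 := by
  have ht : (⟨![A, B, C], hABC⟩ :
      Affine.Triangle ℝ (EuclideanSpace ℝ (Fin 2))).points = ![A, B, C] := rfl
  set t : Affine.Triangle ℝ (EuclideanSpace ℝ (Fin 2)) := ⟨![A, B, C], hABC⟩ with htdef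
  -- orthocenter orthogonality
  have key : ∀ i j k : Fin 3, j ≠ i → k ≠ i →
      ⟪t.points j - t.points k, H - t.points i⟫ = 0 := by
    intro i j k hj hk
    have hmem : H -ᵥ t.points i ∈ (t.altitude i).direction :=
      AffineSubspace.vsub_mem_direction (hH ▸ t.orthocenter_mem_altitude) (t.mem_altitude i)
    rw [Affine.Simplex.direction_altitude] at hmem
    have hx : t.points j -ᵥ t.points k ∈
        vectorSpan ℝ (t.points '' {i}ᶜ) := by
      apply vsub_mem_vectorSpan
      · exact ⟨j, by simp [hj], rfl⟩
      · exact ⟨k, by simp [hk], rfl⟩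
    have h2 := (Submodule.mem_inf.1 hmem).1
    rw [Submodule.mem_orthogonal] at h2
    simpa [vsub_eq_sub] using h2 _ hx
  have e1' : ⟪(C - A) - (B - A), H - A⟫ = 0 := by
    have := key 0 2 1 (by decide) (by decide)
    simpa [ht, sub_sub_sub_cancel_right] using this
  have e2' : ⟪C - A, (H - A) - (B - A)⟫ = 0 := by
    have := key 1 2 0 (by decide) (by decide)
    simpa [ht, sub_sub_sub_cancel_right] using this
  obtain ⟨u, hu⟩ : ∃ u : EuclideanSpace ℝ (Fin 2), u = B - A := ⟨_, rfl⟩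
  obtain ⟨v, hv⟩ : ∃ v : EuclideanSpace ℝ (Fin 2), v = C - A := ⟨_, rfl⟩
  obtain ⟨q, hq⟩ : ∃ q : EuclideanSpace ℝ (Fin 2), q = H - A := ⟨_, rfl⟩
  rw [← hu, ← hv, ← hq] at e1' e2'
  have hcomm : ⟪v, u⟫ = ⟪u, v⟫ := real_inner_comm u v
  -- side length identities
  have hb2 : b ^ 2 = ⟪v, v⟫ := by
    rw [hb, dist_eq_norm, ← hv, real_inner_self_eq_norm_sq]
  have hc2 : c ^ 2 = ⟪u, u⟫ := by
    rw [hc, dist_eq_norm, ← norm_neg, neg_sub, ← hu, real_inner_self_eq_norm_sq]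
  have ha2 : a ^ 2 = ⟪v - u, v - u⟫ := by
    have hCB : C - B = v - u := by rw [hu, hv]; abel
    rw [ha, dist_eq_norm, ← norm_neg, neg_sub, hCB, real_inner_self_eq_norm_sq]
  have hm : b ^ 2 + c ^ 2 - a ^ 2 = 2 * ⟪u, v⟫ := by
    rw [hb2, hc2, ha2, real_inner_sub_sub_self, hcomm]; ring
  have hKi : 2 * b ^ 2 + 2 * c ^ 2 - a ^ 2 = ⟪u, u⟫ + 2 * ⟪u, v⟫ + ⟪v, v⟫ := by
    rw [hb2, hc2, ha2, real_inner_sub_sub_self, hcomm]; ring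
  -- nondegeneracy
  have hw : u + v ≠ 0 := by
    intro h0
    rw [affineIndependent_iff_not_collinear_set] at hABC
    apply hABC
    apply (collinear_iff_of_mem (Set.mem_insert A _)).2
    refine ⟨u, ?_⟩
    intro p hp
    simp only [Set.mem_insert_iff, Set.mem_singleton_iff] at hp
    rcases hp with h | h | h
    · exact ⟨0, by simp [h]⟩
    · exact ⟨1, by rw [h, vadd_eq_add, one_smul, hu]; abel⟩
    · refine ⟨-1, ?_⟩
      have hvu : v = -u := by rw [eq_neg_iff_add_eq_zero, add_comm]; exact h0
      rw [h, vadd_eq_add]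
      have : C = v + A := by rw [hv]; abel
      rw [this, hvu, neg_one_smul]
  have hKpos : (0:ℝ) < 2 * b ^ 2 + 2 * c ^ 2 - a ^ 2 := by
    have h1 : (0:ℝ) < ‖u + v‖ ^ 2 := pow_pos (norm_pos_iff.mpr hw) 2
    have h2 : ⟪u + v, u + v⟫ = ‖u + v‖ ^ 2 := real_inner_self_eq_norm_sq _
    rw [real_inner_add_add_self] at h2
    linarith [hKi, h2]
  have hKne : (2 * b ^ 2 + 2 * c ^ 2 - a ^ 2) ≠ 0 := ne_of_gt hKpos
  have haHA : aH - A = ((b^2 + c^2 - a^2) / (2*b^2 + 2*c^2 - a^2)) • u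
      + ((b^2 + c^2 - a^2) / (2*b^2 + 2*c^2 - a^2)) • v := by
    rw [haH, hu, hv]
    match_scalars
    · linear_combination mul_inv_cancel₀ hKne
    · ring
    · ring
  have hGA : G - A = (3 : ℝ)⁻¹ • u + (3 : ℝ)⁻¹ • v := by
    rw [hG, hu, hv]
    match_scalars <;> norm_num
  constructor
  · apply (collinear_iff_of_mem (Set.mem_insert A _)).2
    refine ⟨u + v, ?_⟩
    intro p hp
    simp only [Set.mem_insert_iff, Set.mem_singleton_iff] at hp
    rcases hp with h | h | h
    · exact ⟨0, by simp [h]⟩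
    · refine ⟨(3:ℝ)⁻¹, ?_⟩
      rw [h, vadd_eq_add, smul_add, ← hGA]; abel
    · refine ⟨(b^2 + c^2 - a^2) / (2*b^2 + 2*c^2 - a^2), ?_⟩
      rw [h, vadd_eq_add, smul_add, ← haHA]; abel
  · have hGaH : G - aH = ((3:ℝ)⁻¹ - (b^2 + c^2 - a^2) / (2*b^2 + 2*c^2 - a^2)) • u
        + ((3:ℝ)⁻¹ - (b^2 + c^2 - a^2) / (2*b^2 + 2*c^2 - a^2)) • v := by
      have h3 : G - aH = (G - A) - (aH - A) := by abel
      rw [h3, hGA, haHA, sub_smul, sub_smul]; abel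
    have hHaH : H - aH = q - (((b^2 + c^2 - a^2) / (2*b^2 + 2*c^2 - a^2)) • u
        + ((b^2 + c^2 - a^2) / (2*b^2 + 2*c^2 - a^2)) • v) := by
      have h3 : H - aH = (H - A) - (aH - A) := by abel
      rw [h3, haHA, ← hq]
    rw [hGaH, hHaH]
    have evH : ⟪v, q⟫ = ⟪u, v⟫ := by
      rw [inner_sub_right] at e2'
      rw [← hcomm]; linarith
    have euH : ⟪u, q⟫ = ⟪u, v⟫ := by
      rw [inner_sub_left] at e1'
      linarith [evH]
    have hmain : ⟪u, q⟫ + ⟪v, q⟫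
        - ((b^2 + c^2 - a^2) / (2*b^2 + 2*c^2 - a^2))
          * (⟪u, u⟫ + ⟪u, v⟫ + ⟪v, u⟫ + ⟪v, v⟫) = 0 := by
      rw [euH, evH, hcomm]
      have h4 : ⟪u, u⟫ + ⟪u, v⟫ + ⟪u, v⟫ + ⟪v, v⟫ = 2*b^2 + 2*c^2 - a^2 := by
        linarith [hKi]
      rw [h4, div_mul_cancel₀ _ hKne]
      linarith [hm]
    simp only [inner_add_left, inner_sub_right, inner_add_right, real_inner_smul_left,
      real_inner_smul_right]
    linear_combination ((3:ℝ)⁻¹ - (b^2 + c^2 - a^2) / (2*b^2 + 2*c^2 - a^2)) * hmain
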